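/- (Connes' Cantor-set spectral triple, resolvent estimate) Let ℓ : ℕ → ℝ be a decreasing sequence with ℓ_n > 0 and ℓ_n → 0, let H = ℓ²(ℕ × Bool, ℂ), let D be the closure of the operator defined on finitely supported elements by (D₀ξ)(n, b) = ℓ_n⁻¹ · ξ(n, ¬b), and let R = R_i(D) be the resolvent at λ = i. For j ∈ ℕ, let P_j be the orthogonal projection of H onto the subspace of elements supported in {(n, b) : n ≤ j}. Then ‖P_j R P_j − R‖ ≤ ℓ_{j+1}; in particular ‖P_j R P_j − R‖ ≤ ℓ_j and P_j R P_j → R in operator norm. -/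

import Mathlib

open Filter Topology

/-- The Hilbert space `ℓ²(ℕ × Bool, ℂ)`. -/
noncomputable abbrev CantorH : Type := lp (fun _ : ℕ × Bool => ℂ) 2

/-- `R` is the resolvent of the (unbounded) operator `T` at `lam`. -/
def IsResolvent {K : Type*} [NormedAddCommGroup K] [InnerProductSpace ℂ K]
    (T : K →ₗ.[ℂ] K) (lam : ℂ) (R : K →L[ℂ] K) : Prop :=
  (∀ y : K, ∃ h : R y ∈ T.domain, T ⟨R y, h⟩ - lam • R y = y) ∧
  ∀ x : T.domain, R (T x - lam • (x : K)) = x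

section Aux

/-- Evaluation at a point, as a continuous linear map on `CantorH`. -/
noncomputable def evalCLM (q : ℕ × Bool) : CantorH →L[ℂ] ℂ :=
  LinearMap.mkContinuous
    { toFun := fun f => f q
      map_add' := fun f g => congrFun (lp.coeFn_add f g) q
      map_smul' := fun c f => congrFun (lp.coeFn_smul c f) q }
    1 (fun f => by simpa using lp.norm_apply_le_norm (by norm_num) f q)

@[simp] lemma evalCLM_apply (q : ℕ × Bool) (f : CantorH) : evalCLM q f = f q := rfl

lemma single_one_apply (p q : ℕ × Bool) :
    (lp.single 2 p (1:ℂ) : CantorH) q = if q = p then 1 else 0 := by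
  rcases eq_or_ne q p with h | h
  · subst h; simp [lp.single_apply_self]
  · simp [lp.single_apply_ne _ _ _ h, h]

lemma core_eq (u : ℝ) (a b : ℂ) :
    ‖(Complex.I * (((u^2+1)⁻¹ : ℝ) : ℂ)) * a + (((u*(u^2+1)⁻¹ : ℝ)) : ℂ) * b‖^2
      + ‖(Complex.I * (((u^2+1)⁻¹ : ℝ) : ℂ)) * b + (((u*(u^2+1)⁻¹ : ℝ)) : ℂ) * a‖^2
      = (u^2+1)⁻¹ * (‖a‖^2 + ‖b‖^2) := by
  have hne : u^2+1 ≠ 0 := by positivity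
  simp only [Complex.sq_norm, Complex.normSq_apply, Complex.add_re,
    Complex.add_im, Complex.mul_re, Complex.mul_im, Complex.I_re, Complex.I_im,
    Complex.ofReal_re, Complex.ofReal_im]
  field_simp
  ring

lemma norm_le_of_pair (f z : CantorH) (M : ℝ) (hM : 0 ≤ M)
    (h : ∀ n : ℕ, ‖f (n, false)‖^2 + ‖f (n, true)‖^2
        ≤ M^2 * (‖z (n, false)‖^2 + ‖z (n, true)‖^2)) :
    ‖f‖ ≤ M * ‖z‖ := by
  have hp : 0 < (2 : ENNReal).toReal := by norm_num
  refine lp.norm_le_of_forall_sum_le hp (by positivity) (fun s => ?_)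
  have h2 : ((2 : ENNReal).toReal) = ((2:ℕ) : ℝ) := by norm_num
  simp_rw [h2, Real.rpow_natCast]
  set t : Finset ℕ := s.image Prod.fst with ht
  have hsub : s ⊆ t ×ˢ (Finset.univ : Finset Bool) := by
    rintro ⟨n, b⟩ hm
    exact Finset.mem_product.2 ⟨Finset.mem_image_of_mem _ hm, Finset.mem_univ _⟩
  calc ∑ i ∈ s, ‖f i‖ ^ 2
      ≤ ∑ i ∈ t ×ˢ (Finset.univ : Finset Bool), ‖f i‖ ^ 2 :=
        Finset.sum_le_sum_of_subset_of_nonneg hsub (fun _ _ _ => by positivity)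
    _ = ∑ n ∈ t, (‖f (n, false)‖^2 + ‖f (n, true)‖^2) := by
        rw [Finset.sum_product]
        exact Finset.sum_congr rfl (fun n _ => by simp [Fintype.sum_bool, add_comm])
    _ ≤ ∑ n ∈ t, M^2 * (‖z (n, false)‖^2 + ‖z (n, true)‖^2) :=
        Finset.sum_le_sum (fun n _ => h n)
    _ = M^2 * ∑ i ∈ t ×ˢ (Finset.univ : Finset Bool), ‖z i‖ ^ 2 := by
        rw [Finset.mul_sum, Finset.sum_product]
        exact Finset.sum_congr rfl (fun n _ => by simp [Fintype.sum_bool]; ring)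
    _ ≤ M^2 * ‖z‖ ^ 2 := by
        refine mul_le_mul_of_nonneg_left ?_ (by positivity)
        have := lp.sum_rpow_le_norm_rpow hp z (t ×ˢ (Finset.univ : Finset Bool))
        simpa [h2, Real.rpow_natCast] using this
    _ = (M * ‖z‖) ^ 2 := by ring

end Aux

set_option maxHeartbeats 1000000 in
/-- **Connes' Cantor-set spectral triple, resolvent estimate.** With `ℓ`
decreasing to `0`, `D` the closure of `(D₀ξ)(n, b) = ℓ_n⁻¹ ξ(n, ¬b)`, `R` the resolvent
of `D` at `λ = i`, and `P_j` the projection onto elements supported in `{(n, b) : n ≤ j}`,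
one has `‖P_j R P_j − R‖ ≤ ℓ_{j+1} ≤ ℓ_j`, so `P_j R P_j → R` in operator norm. -/
theorem stmt17
    (ℓ : ℕ → ℝ) (hanti : Antitone ℓ) (hpos : ∀ n, 0 < ℓ n)
    (hlim : Tendsto ℓ atTop (𝓝 0))
    (D₀ : CantorH →ₗ.[ℂ] CantorH)
    (hdom : (D₀.domain : Set CantorH) =
      {x : CantorH | (Function.support fun p : ℕ × Bool => x p).Finite})
    (hact : ∀ (ξ : D₀.domain) (n : ℕ) (b : Bool),
      (D₀ ξ) (n, b) = (ℓ n)⁻¹ • (ξ : CantorH) (n, !b))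
    (R : CantorH →L[ℂ] CantorH) (hR : IsResolvent D₀.closure Complex.I R)
    (P : ℕ → CantorH →L[ℂ] CantorH)
    (hP : ∀ (j : ℕ) (x : CantorH) (n : ℕ) (b : Bool),
      (P j x) (n, b) = if n ≤ j then x (n, b) else 0) :
    (∀ j : ℕ, ‖P j ∘L R ∘L P j - R‖ ≤ ℓ (j + 1)) ∧
    (∀ j : ℕ, ‖P j ∘L R ∘L P j - R‖ ≤ ℓ j) ∧
    Tendsto (fun j => P j ∘L R ∘L P j) atTop (𝓝 R) := by
  classical
  set e : ℕ × Bool → CantorH := fun q => lp.single 2 q 1 with he_def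
  have he_app : ∀ p q, (e p) q = if q = p then 1 else 0 := fun p q => single_one_apply p q
  -- membership of basis vectors in the domain
  have hmem : ∀ q, e q ∈ D₀.domain := by
    intro q
    have : e q ∈ (D₀.domain : Set CantorH) := by
      rw [hdom]
      refine Set.Finite.subset (Set.finite_singleton q) ?_
      intro r hr
      simp only [Function.mem_support] at hr
      rw [Set.mem_singleton_iff]
      by_contra hne
      exact hr (lp.single_apply_ne 2 q 1 hne)
    exact this
  -- scalars
  set c : ℕ → ℝ := fun n => (ℓ n)⁻¹ with hc_def
  set α : ℕ → ℂ := fun n => Complex.I * ((((c n)^2+1)⁻¹ : ℝ) : ℂ) with hα_def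
  set β : ℕ → ℂ := fun n => (((c n * ((c n)^2+1)⁻¹ : ℝ)) : ℂ) with hβ_def
  have hcpos : ∀ n, 0 < c n := fun n => inv_pos.2 (hpos n)
  -- action of D₀ on basis vectors
  have hDe : ∀ (n : ℕ) (b : Bool),
      D₀ ⟨e (n, b), hmem _⟩ = ((c n : ℝ) : ℂ) • e (n, !b) := by
    intro n b
    apply lp.ext
    funext q
    obtain ⟨m, cb⟩ := q
    rw [hact ⟨e (n, b), hmem _⟩ m cb]
    have h1 : (((c n : ℝ) : ℂ) • e (n, !b)) (m, cb) = ((c n : ℝ) : ℂ) * (e (n, !b)) (m, cb) :=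
      congrFun (lp.coeFn_smul _ _) (m, cb)
    rw [h1, he_app, he_app]
    rcases eq_or_ne m n with rfl | hmn
    · cases b <;> cases cb <;>
        simp [Prod.ext_iff, Complex.real_smul, hc_def]
    · simp [Prod.ext_iff, hmn]
  -- resolvent identity on basis vectors
  have hstep : ∀ (n : ℕ) (b : Bool),
      R (((c n : ℝ) : ℂ) • e (n, !b) - Complex.I • e (n, b)) = e (n, b) := by
    intro n b
    have h1 := D₀.le_closure
    have hzc : e (n, b) ∈ D₀.closure.domain := h1.1 (hmem _)
    have h2 := hR.2 ⟨_, hzc⟩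
    have h3 : D₀ ⟨e (n, b), hmem _⟩ = D₀.closure ⟨_, hzc⟩ := h1.2 rfl
    rw [← h3, hDe n b] at h2
    exact h2
  -- R on basis vectors
  have hRe : ∀ (n : ℕ) (b : Bool),
      R (e (n, b)) = α n • e (n, b) + β n • e (n, !b) := by
    intro n b
    have hden : (((c n)^2 + 1 : ℝ) : ℂ) ≠ 0 :=
      Complex.ofReal_ne_zero.2 (by positivity)
    have hid : α n • (((c n : ℝ) : ℂ) • e (n, !b) - Complex.I • e (n, b))
        + β n • (((c n : ℝ) : ℂ) • e (n, b) - Complex.I • e (n, !b)) = e (n, b) := by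
      have hne' : (((c n : ℝ) : ℂ)^2 + 1) ≠ 0 := by
        have h0 : ((((c n)^2 + 1 : ℝ)) : ℂ) ≠ 0 := Complex.ofReal_ne_zero.2 (by positivity)
        push_cast at h0
        convert h0 using 2
      simp only [hα_def, hβ_def]
      match_scalars
      · ring
      · field_simp
        linear_combination (-1 : ℂ) * Complex.I_sq
    calc R (e (n, b)) = R (α n • (((c n : ℝ) : ℂ) • e (n, !b) - Complex.I • e (n, b))
        + β n • (((c n : ℝ) : ℂ) • e (n, b) - Complex.I • e (n, !b))) := by rw [hid]
      _ = α n • R (((c n : ℝ) : ℂ) • e (n, !b) - Complex.I • e (n, b))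
          + β n • R (((c n : ℝ) : ℂ) • e (n, b) - Complex.I • e (n, !b)) := by
          rw [map_add, map_smul, map_smul]
      _ = α n • e (n, b) + β n • e (n, !b) := by
          rw [hstep n b]
          have := hstep n (!b)
          rw [Bool.not_not] at this
          rw [this]
  -- pointwise formula for R
  have hRpt : ∀ (z : CantorH) (n : ℕ) (b : Bool),
      (R z) (n, b) = α n * z (n, b) + β n * z (n, !b) := by
    intro z n b
    set Φ : CantorH →L[ℂ] ℂ :=
      (evalCLM (n, b)).comp R - α n • evalCLM (n, b) - β n • evalCLM (n, !b) with hΦ_def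
    have hΦe : ∀ q : ℕ × Bool, Φ (lp.single 2 q (z q)) = 0 := by
      rintro ⟨m, cb⟩
      have hz1 : lp.single 2 (m, cb) (z (m, cb)) = z (m, cb) • e (m, cb) := by
        rw [he_def]
        rw [← lp.single_smul]
        simp
      rw [hz1, map_smul]
      have hΦ0 : Φ (e (m, cb)) = 0 := by
        simp only [hΦ_def, ContinuousLinearMap.sub_apply, ContinuousLinearMap.smul_apply,
          ContinuousLinearMap.comp_apply, evalCLM_apply, hRe m cb]
        have hadd : (α m • e (m, cb) + β m • e (m, !cb)) (n, b)
            = α m * (e (m, cb)) (n, b) + β m * (e (m, !cb)) (n, b) := by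
          have h1 := congrFun (lp.coeFn_add (α m • e (m, cb)) (β m • e (m, !cb))) (n, b)
          have h2 := congrFun (lp.coeFn_smul (α m) (e (m, cb))) (n, b)
          have h3 := congrFun (lp.coeFn_smul (β m) (e (m, !cb))) (n, b)
          simp only [Pi.add_apply, Pi.smul_apply, smul_eq_mul] at h1 h2 h3
          rw [h1, h2, h3]
        rw [hadd]
        simp only [he_app, smul_eq_mul]
        rcases eq_or_ne m n with rfl | hmn
        · cases b <;> cases cb <;> simp [Prod.ext_iff]
        · simp [Prod.ext_iff, hmn, Ne.symm hmn]
      rw [hΦ0, smul_zero]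
    have hsum : HasSum (fun q : ℕ × Bool => lp.single 2 q (z q)) z :=
      lp.hasSum_single (by norm_num) z
    have h0 : HasSum (fun q : ℕ × Bool => (0 : ℂ)) (Φ z) := by
      have := hsum.mapL Φ
      simpa [hΦe] using this
    have hΦz : Φ z = 0 := by
      have := h0.unique hasSum_zero
      simpa using this
    simp only [hΦ_def, ContinuousLinearMap.sub_apply, ContinuousLinearMap.smul_apply,
      ContinuousLinearMap.comp_apply, evalCLM_apply, smul_eq_mul] at hΦz
    linear_combination hΦz
  -- norm bound for R on tails
  have hfin : ∀ (j : ℕ) (z : CantorH), (∀ n b, n ≤ j → z (n, b) = 0) →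
      ‖R z‖ ≤ ℓ (j + 1) * ‖z‖ := by
    intro j z hz
    refine norm_le_of_pair (R z) z (ℓ (j + 1)) (hpos _).le (fun n => ?_)
    by_cases hn : n ≤ j
    · have h1 : (R z) (n, false) = 0 := by
        rw [hRpt]; simp [Bool.not_false, hz n false hn, hz n true hn]
      have h2 : (R z) (n, true) = 0 := by
        rw [hRpt]; simp [Bool.not_true, hz n true hn, hz n false hn]
      rw [h1, h2]
      simp only [norm_zero]
      norm_num
      positivity
    · rw [hRpt z n false, hRpt z n true]
      have hcore := core_eq (c n) (z (n, false)) (z (n, true))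
      simp only [Bool.not_false, Bool.not_true]
      simp only [hα_def, hβ_def]
      rw [hcore]
      have h1 : ((c n)^2 + 1)⁻¹ ≤ (ℓ n)^2 := by
        have hc2 : (0:ℝ) < (c n)^2 := pow_pos (hcpos n) 2
        have : ((c n)^2 + 1)⁻¹ ≤ ((c n)^2)⁻¹ :=
          inv_anti₀ hc2 (by linarith)
        calc ((c n)^2 + 1)⁻¹ ≤ ((c n)^2)⁻¹ := this
          _ = (ℓ n)^2 := by rw [hc_def]; simp [← inv_pow]
      have h2 : (ℓ n)^2 ≤ (ℓ (j+1))^2 := by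
        have : ℓ n ≤ ℓ (j+1) := hanti (by omega)
        exact pow_le_pow_left₀ (hpos n).le this 2
      have hS : (0:ℝ) ≤ ‖z (n, false)‖^2 + ‖z (n, true)‖^2 := by positivity
      nlinarith
  -- key estimate
  have hmain : ∀ j : ℕ, ‖P j ∘L R ∘L P j - R‖ ≤ ℓ (j + 1) := by
    intro j
    refine ContinuousLinearMap.opNorm_le_bound _ (hpos _).le (fun y => ?_)
    have hPRP : P j (R (P j y)) = R (P j y) := by
      apply lp.ext
      funext q
      obtain ⟨n, b⟩ := q
      rw [hP j _ n b]
      split_ifs with h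
      · rfl
      · symm
        rw [hRpt, hP j y n b, hP j y n (!b), if_neg h, if_neg h]
        simp
    have hy : (P j ∘L R ∘L P j - R) y = R (P j y - y) := by
      simp only [ContinuousLinearMap.sub_apply, ContinuousLinearMap.comp_apply]
      rw [hPRP, ← map_sub]
    have hzsupp : ∀ n b, n ≤ j → (P j y - y) (n, b) = 0 := by
      intro n b hn
      have h1 := congrFun (lp.coeFn_sub (P j y) y) (n, b)
      simp only [Pi.sub_apply] at h1
      rw [h1, hP j y n b, if_pos hn, sub_self]
    have hpair : ∀ n : ℕ, ‖(P j y - y) (n, false)‖^2 + ‖(P j y - y) (n, true)‖^2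
        ≤ 1^2 * (‖y (n, false)‖^2 + ‖y (n, true)‖^2) := by
      intro n
      · have hb : ∀ b : Bool, ‖(P j y - y) (n, b)‖ ≤ ‖y (n, b)‖ := by
          intro b
          have h1 := congrFun (lp.coeFn_sub (P j y) y) (n, b)
          simp only [Pi.sub_apply] at h1
          rw [h1, hP j y n b]
          split_ifs with h
          · simp
          · simp
        have hf2 : ‖(P j y - y) (n, false)‖^2 ≤ ‖y (n, false)‖^2 :=
          pow_le_pow_left₀ (norm_nonneg _) (hb false) 2
        have ht2 : ‖(P j y - y) (n, true)‖^2 ≤ ‖y (n, true)‖^2 :=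
          pow_le_pow_left₀ (norm_nonneg _) (hb true) 2
        rw [one_pow, one_mul]
        exact add_le_add hf2 ht2
    have hznorm : ‖P j y - y‖ ≤ ‖y‖ := by
      have h := norm_le_of_pair (P j y - y) y 1 zero_le_one hpair
      rwa [one_mul] at h
    rw [hy]
    exact le_trans (hfin j _ hzsupp) (mul_le_mul_of_nonneg_left hznorm (hpos _).le)
  refine ⟨hmain, fun j => (hmain j).trans (hanti (Nat.le_succ j)), ?_⟩
  rw [tendsto_iff_norm_sub_tendsto_zero]
  refine squeeze_zero (fun j => norm_nonneg _) hmain ?_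
  exact hlim.comp (tendsto_add_atTop_nat 1)
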